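/- Let p(t) = 3(t-1)^3(t+3) and q(t) = 3(t+1)^3(t-3). The quaternion algebra class (-p(t), 6t(t+1)) + (-q(t), 6t(t-1)) ∈ Br(Q(t)) has trivial residue at every closed point of P¹ over Q; in particular, at each of the points t = -3, -1, 0, 1, 3, ∞, the tame symbol of the sum of the two quaternion symbols is a square in the residue field. -/

import Mathlib

open Polynomial

/-- The valuation of a rational function at the closed point of `𝐏¹_ℚ` given by
an irreducible polynomial `π`. -/
noncomputable def ordAt (π : Polynomial ℚ) (r : RatFunc ℚ) : ℤ :=
  (multiplicity π r.num : ℤ) - multiplicity π r.denom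

/-- The element `(-1)^{v(f)v(g)} f^{v(g)} g^{-v(f)}` whose residue at `π` is the
tame symbol `∂_π(f,g)`. -/
noncomputable def tameElemAt (π : Polynomial ℚ) (f g : RatFunc ℚ) : RatFunc ℚ :=
  (-1) ^ (ordAt π f * ordAt π g) * f ^ ordAt π g * g ^ (-(ordAt π f))

/-- The residue at `π` of a rational function `r` with `ordAt π r = 0`, namely
`[r.num]/[r.denom]` in the residue field `ℚ[t]/(π)`, is a square in that field.
(In a field, `a/b` is a square iff `a·b` is.) -/
def ResIsSquareAt (π : Polynomial ℚ) (r : RatFunc ℚ) : Prop :=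
  IsSquare (Ideal.Quotient.mk (Ideal.span {π}) (r.num * r.denom))

/-- The valuation at the point `t = ∞` of `𝐏¹_ℚ`. -/
noncomputable def ordInf (r : RatFunc ℚ) : ℤ :=
  (r.denom.natDegree : ℤ) - r.num.natDegree

/-- The element whose residue at `t = ∞` is the tame symbol `∂_∞(f,g)`. -/
noncomputable def tameElemInf (f g : RatFunc ℚ) : RatFunc ℚ :=
  (-1) ^ (ordInf f * ordInf g) * f ^ ordInf g * g ^ (-(ordInf f))

/-- The residue at `t = ∞` of `r` with `ordInf r = 0`, namely the ratio of the
leading coefficients of `r.num` and `r.denom`, is a square in the residue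
field `ℚ`. -/
def ResIsSquareInf (r : RatFunc ℚ) : Prop :=
  IsSquare (r.num.leadingCoeff * r.denom.leadingCoeff)

namespace Stmt8Aux

lemma multAux (α : ℚ) (k : ℕ) (P Q : ℚ[X]) (hP : P = (X - C α) ^ k * Q)
    (hQ : Q.eval α ≠ 0) : multiplicity (X - C α) P = k := by
  apply multiplicity_eq_of_dvd_of_not_dvd ⟨Q, hP⟩
  rw [hP, pow_succ]
  intro hdvd
  have h1 : (X - C α) ∣ Q :=
    (mul_dvd_mul_iff_left (pow_ne_zero k (X_sub_C_ne_zero α))).mp hdvd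
  exact hQ (Polynomial.dvd_iff_isRoot.mp h1)

lemma ordAtAlg (π : ℚ[X]) (hπ : ¬ IsUnit π) (P : ℚ[X]) :
    ordAt π (algebraMap _ (RatFunc ℚ) P) = multiplicity π P := by
  unfold ordAt
  rw [RatFunc.num_algebraMap, RatFunc.denom_algebraMap,
    multiplicity_eq_zero.mpr (fun h => hπ (isUnit_of_dvd_one h))]
  simp

lemma resAt_of_eval (α : ℚ) (r : RatFunc ℚ) (h : IsSquare ((r.num * r.denom).eval α)) :
    ResIsSquareAt (X - C α) r := by
  have heq : Ideal.Quotient.mk (Ideal.span {X - C α}) (r.num * r.denom)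
      = (quotientSpanXSubCAlgEquiv α).symm ((r.num * r.denom).eval α) := by
    rw [← quotientSpanXSubCAlgEquiv_mk α, AlgEquiv.symm_apply_apply]
  rw [ResIsSquareAt, heq]
  exact h.map _

lemma key_div (α : ℚ) (a b : ℚ[X]) (hb : b ≠ 0) (ha : a.eval α ≠ 0)
    (hsq : IsSquare (a.eval α * b.eval α)) :
    ResIsSquareAt (X - C α) (algebraMap ℚ[X] (RatFunc ℚ) a / algebraMap _ _ b) := by
  set r := algebraMap ℚ[X] (RatFunc ℚ) a / algebraMap _ _ b with hr
  have h0 : algebraMap ℚ[X] (RatFunc ℚ) a / algebraMap _ _ b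
      = algebraMap _ _ r.num / algebraMap _ _ r.denom := (RatFunc.num_div_denom r).symm
  have hid : a * r.denom = r.num * b := by
    apply RatFunc.algebraMap_injective ℚ
    rw [map_mul, map_mul]
    exact (div_eq_div_iff (RatFunc.algebraMap_ne_zero hb)
      (RatFunc.algebraMap_ne_zero (r.denom_ne_zero))).mp h0
  have heval : a.eval α * r.denom.eval α = r.num.eval α * b.eval α := by
    have := congrArg (Polynomial.eval α) hid
    simpa [eval_mul] using this
  apply resAt_of_eval
  rw [eval_mul]
  by_cases hen : r.num.eval α = 0
  · exact ⟨0, by rw [hen]; ring⟩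
  · obtain ⟨s, hs⟩ := hsq
    refine ⟨s * (r.num.eval α / a.eval α), ?_⟩
    field_simp
    linear_combination (a.eval α) * heval + (r.num.eval α) * hs

lemma key_inf (a b : ℚ[X]) (ha : a ≠ 0) (hb : b ≠ 0)
    (hsq : IsSquare (a.leadingCoeff * b.leadingCoeff)) :
    ResIsSquareInf (algebraMap ℚ[X] (RatFunc ℚ) a / algebraMap _ _ b) := by
  set r := algebraMap ℚ[X] (RatFunc ℚ) a / algebraMap _ _ b with hr
  have h0 : algebraMap ℚ[X] (RatFunc ℚ) a / algebraMap _ _ b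
      = algebraMap _ _ r.num / algebraMap _ _ r.denom := (RatFunc.num_div_denom r).symm
  have hid : a * r.denom = r.num * b := by
    apply RatFunc.algebraMap_injective ℚ
    rw [map_mul, map_mul]
    exact (div_eq_div_iff (RatFunc.algebraMap_ne_zero hb)
      (RatFunc.algebraMap_ne_zero (r.denom_ne_zero))).mp h0
  have hrne : r ≠ 0 := div_ne_zero (RatFunc.algebraMap_ne_zero ha) (RatFunc.algebraMap_ne_zero hb)
  have hnum : r.num ≠ 0 := RatFunc.num_ne_zero hrne
  have hlc : a.leadingCoeff * r.denom.leadingCoeff = r.num.leadingCoeff * b.leadingCoeff := by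
    have := congrArg Polynomial.leadingCoeff hid
    simpa [leadingCoeff_mul] using this
  obtain ⟨s, hs⟩ := hsq
  refine ⟨s * (r.num.leadingCoeff / a.leadingCoeff), ?_⟩
  have ha' : a.leadingCoeff ≠ 0 := leadingCoeff_ne_zero.mpr ha
  field_simp [ResIsSquareInf]
  linear_combination (r.num.leadingCoeff * r.num.leadingCoeff) * hs
    + (r.num.leadingCoeff * a.leadingCoeff) * hlc

lemma ordInfAlg (P : ℚ[X]) : ordInf (algebraMap _ (RatFunc ℚ) P) = -(P.natDegree) := by
  unfold ordInf
  rw [RatFunc.num_algebraMap, RatFunc.denom_algebraMap, natDegree_one]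
  simp

noncomputable abbrev A : ℚ[X] →+* RatFunc ℚ := algebraMap ℚ[X] (RatFunc ℚ)
noncomputable def F1 : ℚ[X] := -(3*(X-1)^3*(X+3))
noncomputable def G1 : ℚ[X] := 6*X*(X+1)
noncomputable def F2 : ℚ[X] := -(3*(X+1)^3*(X-3))
noncomputable def G2 : ℚ[X] := 6*X*(X-1)

lemma F1_ne : F1 ≠ 0 := by
  intro h; have := congrArg (Polynomial.eval (0:ℚ)) h; simp [F1] at this
lemma G1_ne : G1 ≠ 0 := by
  intro h; have := congrArg (Polynomial.eval (1:ℚ)) h; simp [G1] at this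
lemma F2_ne : F2 ≠ 0 := by
  intro h; have := congrArg (Polynomial.eval (0:ℚ)) h; simp [F2] at this
lemma G2_ne : G2 ≠ 0 := by
  intro h; have := congrArg (Polynomial.eval (2:ℚ)) h; simp [G2] at this; norm_num at this

end Stmt8Aux

set_option maxHeartbeats 2000000 in
open Stmt8Aux in
theorem stmt_8 (t p q : RatFunc ℚ) (ht : t = RatFunc.X)
    (hp : p = 3 * (t - 1) ^ 3 * (t + 3))
    (hq : q = 3 * (t + 1) ^ 3 * (t - 3)) :
    (∀ π : Polynomial ℚ, Irreducible π →
      ResIsSquareAt π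
        (tameElemAt π (-p) (6 * t * (t + 1)) * tameElemAt π (-q) (6 * t * (t - 1)))) ∧
    (∀ α : ℚ, α ∈ ({-3, -1, 0, 1, 3} : Set ℚ) →
      ResIsSquareAt (X - C α)
        (tameElemAt (X - C α) (-p) (6 * t * (t + 1)) *
          tameElemAt (X - C α) (-q) (6 * t * (t - 1)))) ∧
    ResIsSquareInf
      (tameElemInf (-p) (6 * t * (t + 1)) * tameElemInf (-q) (6 * t * (t - 1))) := by
  subst hp hq ht
  have hf1 : -(3*(RatFunc.X - 1)^3*(RatFunc.X+3) : RatFunc ℚ) = A F1 := by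
    simp only [F1, map_neg, map_mul, map_pow, map_sub, map_add, map_ofNat, map_one,
      RatFunc.algebraMap_X]
  have hg1 : (6*RatFunc.X*(RatFunc.X+1) : RatFunc ℚ) = A G1 := by
    simp only [G1, map_mul, map_add, map_ofNat, map_one, RatFunc.algebraMap_X]
  have hf2 : -(3*(RatFunc.X + 1)^3*(RatFunc.X-3) : RatFunc ℚ) = A F2 := by
    simp only [F2, map_neg, map_mul, map_pow, map_sub, map_add, map_ofNat, map_one,
      RatFunc.algebraMap_X]
  have hg2 : (6*RatFunc.X*(RatFunc.X-1) : RatFunc ℚ) = A G2 := by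
    simp only [G2, map_mul, map_sub, map_ofNat, map_one, RatFunc.algebraMap_X]
  rw [hf1, hg1, hf2, hg2]
  -- multiplicity computations
  have mF1 : ∀ α : ℚ, ∀ k : ℕ, ∀ Q : ℚ[X], F1 = (X - C α)^k * Q → Q.eval α ≠ 0 →
      ordAt (X - C α) (A F1) = k := fun α k Q h1 h2 => by
    rw [ordAtAlg _ (not_isUnit_X_sub_C _), multAux α k F1 Q h1 h2]
  have mG1 : ∀ α : ℚ, ∀ k : ℕ, ∀ Q : ℚ[X], G1 = (X - C α)^k * Q → Q.eval α ≠ 0 →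
      ordAt (X - C α) (A G1) = k := fun α k Q h1 h2 => by
    rw [ordAtAlg _ (not_isUnit_X_sub_C _), multAux α k G1 Q h1 h2]
  have mF2 : ∀ α : ℚ, ∀ k : ℕ, ∀ Q : ℚ[X], F2 = (X - C α)^k * Q → Q.eval α ≠ 0 →
      ordAt (X - C α) (A F2) = k := fun α k Q h1 h2 => by
    rw [ordAtAlg _ (not_isUnit_X_sub_C _), multAux α k F2 Q h1 h2]
  have mG2 : ∀ α : ℚ, ∀ k : ℕ, ∀ Q : ℚ[X], G2 = (X - C α)^k * Q → Q.eval α ≠ 0 →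
      ordAt (X - C α) (A G2) = k := fun α k Q h1 h2 => by
    rw [ordAtAlg _ (not_isUnit_X_sub_C _), multAux α k G2 Q h1 h2]
  -- the five key points
  have keyN3 : ResIsSquareAt (X - C (-3:ℚ))
      (tameElemAt (X - C (-3)) (A F1) (A G1) * tameElemAt (X - C (-3)) (A F2) (A G2)) := by
    rw [tameElemAt, tameElemAt,
      mF1 (-3) 1 (-(3*(X-1)^3)) (by simp only [F1, map_neg, map_ofNat]; ring) (by norm_num),
      mG1 (-3) 0 G1 (by rw [pow_zero, one_mul]) (by norm_num [G1]),
      mF2 (-3) 0 F2 (by rw [pow_zero, one_mul]) (by norm_num [F2]),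
      mG2 (-3) 0 G2 (by rw [pow_zero, one_mul]) (by norm_num [G2])]
    have h2 := key_div (-3) 1 G1 G1_ne (by simp) ⟨6, by norm_num [G1]⟩
    convert h2 using 1
    rw [map_one, one_div]
    norm_num
  have keyN1 : ResIsSquareAt (X - C (-1:ℚ))
      (tameElemAt (X - C (-1)) (A F1) (A G1) * tameElemAt (X - C (-1)) (A F2) (A G2)) := by
    rw [tameElemAt, tameElemAt,
      mF1 (-1) 0 F1 (by rw [pow_zero, one_mul]) (by norm_num [F1]),
      mG1 (-1) 1 (6*X) (by simp only [G1, map_neg, map_one]; ring) (by simp),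
      mF2 (-1) 3 (-(3*(X-3))) (by simp only [F2, map_neg, map_one, map_ofNat]; ring)
        (by norm_num),
      mG2 (-1) 0 G2 (by rw [pow_zero, one_mul]) (by norm_num [G2])]
    have h2 := key_div (-1) F1 (G2^3) (pow_ne_zero 3 G2_ne) (by norm_num [F1])
      ⟨288, by norm_num [F1, G2, eval_pow]⟩
    convert h2 using 1
    rw [map_pow, div_eq_mul_inv]
    norm_num
  have key0 : ResIsSquareAt (X - C (0:ℚ))
      (tameElemAt (X - C 0) (A F1) (A G1) * tameElemAt (X - C 0) (A F2) (A G2)) := by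
    rw [tameElemAt, tameElemAt,
      mF1 0 0 F1 (by rw [pow_zero, one_mul]) (by norm_num [F1]),
      mG1 0 1 (6*(X+1)) (by simp only [G1, map_zero]; ring) (by simp),
      mF2 0 0 F2 (by rw [pow_zero, one_mul]) (by norm_num [F2]),
      mG2 0 1 (6*(X-1)) (by simp only [G2, map_zero]; ring) (by simp)]
    have h2 := key_div 0 (F1*F2) 1 one_ne_zero (by norm_num [F1, F2]) ⟨9, by norm_num [F1, F2]⟩
    convert h2 using 1
    rw [map_mul, map_one, div_one]
    norm_num
  have key1 : ResIsSquareAt (X - C (1:ℚ))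
      (tameElemAt (X - C 1) (A F1) (A G1) * tameElemAt (X - C 1) (A F2) (A G2)) := by
    rw [tameElemAt, tameElemAt,
      mF1 1 3 (-(3*(X+3))) (by simp only [F1, map_one]; ring) (by norm_num),
      mG1 1 0 G1 (by rw [pow_zero, one_mul]) (by norm_num [G1]),
      mF2 1 0 F2 (by rw [pow_zero, one_mul]) (by norm_num [F2]),
      mG2 1 1 (6*X) (by simp only [G2, map_one]; ring) (by simp)]
    have h2 := key_div 1 F2 (G1^3) (pow_ne_zero 3 G1_ne) (by norm_num [F2])
      ⟨288, by norm_num [F2, G1, eval_pow]⟩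
    convert h2 using 1
    rw [map_pow, div_eq_mul_inv]
    norm_num
    exact mul_comm _ _
  have key3 : ResIsSquareAt (X - C (3:ℚ))
      (tameElemAt (X - C 3) (A F1) (A G1) * tameElemAt (X - C 3) (A F2) (A G2)) := by
    rw [tameElemAt, tameElemAt,
      mF1 3 0 F1 (by rw [pow_zero, one_mul]) (by norm_num [F1]),
      mG1 3 0 G1 (by rw [pow_zero, one_mul]) (by norm_num [G1]),
      mF2 3 1 (-(3*(X+1)^3)) (by simp only [F2, map_ofNat]; ring) (by norm_num),
      mG2 3 0 G2 (by rw [pow_zero, one_mul]) (by norm_num [G2])]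
    have h2 := key_div 3 1 G2 G2_ne (by simp) ⟨6, by norm_num [G2]⟩
    convert h2 using 1
    rw [map_one, one_div]
    norm_num
  refine ⟨?_, ?_, ?_⟩
  · -- all closed points
    intro π hπ
    have hprime : Prime π := hπ.prime
    have red : ∀ (L : ℚ[X]), Irreducible L → π ∣ L →
        ResIsSquareAt L (tameElemAt L (A F1) (A G1) * tameElemAt L (A F2) (A G2)) →
        ResIsSquareAt π (tameElemAt π (A F1) (A G1) * tameElemAt π (A F2) (A G2)) := by
      intro L hL hdvd hres
      have hassoc : Associated π L := hπ.associated_of_dvd hL hdvd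
      have hord : ∀ r, ordAt π r = ordAt L r := fun r => by
        unfold ordAt
        rw [multiplicity_eq_of_associated_left hassoc, multiplicity_eq_of_associated_left hassoc]
      have htame : ∀ f g, tameElemAt π f g = tameElemAt L f g := fun f g => by
        rw [tameElemAt, tameElemAt, hord, hord]
      rw [htame, htame, ResIsSquareAt]
      have := hres.map (Ideal.quotEquivOfEq (Ideal.span_singleton_eq_span_singleton.mpr hassoc).symm)
      rwa [Ideal.quotEquivOfEq_mk] at this
    by_cases d1 : π ∣ (X - C (-3:ℚ))
    · exact red _ (irreducible_X_sub_C _) d1 keyN3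
    by_cases d2 : π ∣ (X - C (-1:ℚ))
    · exact red _ (irreducible_X_sub_C _) d2 keyN1
    by_cases d3 : π ∣ (X - C (0:ℚ))
    · exact red _ (irreducible_X_sub_C _) d3 key0
    by_cases d4 : π ∣ (X - C (1:ℚ))
    · exact red _ (irreducible_X_sub_C _) d4 key1
    by_cases d5 : π ∣ (X - C (3:ℚ))
    · exact red _ (irreducible_X_sub_C _) d5 key3
    -- generic point
    have h3u : IsUnit (3:ℚ[X]) := by
      rw [← map_ofNat (C : ℚ →+* ℚ[X]) 3]; exact isUnit_C.mpr (by norm_num)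
    have h6u : IsUnit (6:ℚ[X]) := by
      rw [← map_ofNat (C : ℚ →+* ℚ[X]) 6]; exact isUnit_C.mpr (by norm_num)
    have eM1 : (X - 1 : ℚ[X]) = X - C 1 := by rw [map_one]
    have eP1 : (X + 1 : ℚ[X]) = X - C (-1) := by rw [map_neg, map_one]; ring
    have eM3 : (X - 3 : ℚ[X]) = X - C 3 := by rw [map_ofNat]
    have eP3 : (X + 3 : ℚ[X]) = X - C (-3) := by rw [map_neg, map_ofNat]; ring
    have eX : (X : ℚ[X]) = X - C 0 := by rw [map_zero, sub_zero]
    have ndF1 : ¬ π ∣ F1 := by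
      intro h
      rcases hprime.dvd_mul.mp (dvd_neg.mp h) with h' | h'
      · rcases hprime.dvd_mul.mp h' with h'' | h''
        · exact hπ.not_isUnit (isUnit_of_dvd_unit h'' h3u)
        · exact d4 (eM1 ▸ hprime.dvd_of_dvd_pow h'')
      · exact d1 (eP3 ▸ h')
    have ndF2 : ¬ π ∣ F2 := by
      intro h
      rcases hprime.dvd_mul.mp (dvd_neg.mp h) with h' | h'
      · rcases hprime.dvd_mul.mp h' with h'' | h''
        · exact hπ.not_isUnit (isUnit_of_dvd_unit h'' h3u)
        · exact d2 (eP1 ▸ hprime.dvd_of_dvd_pow h'')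
      · exact d5 (eM3 ▸ h')
    have ndG1 : ¬ π ∣ G1 := by
      intro h
      rcases hprime.dvd_mul.mp h with h' | h'
      · rcases hprime.dvd_mul.mp h' with h'' | h''
        · exact hπ.not_isUnit (isUnit_of_dvd_unit h'' h6u)
        · exact d3 (eX ▸ h'')
      · exact d2 (eP1 ▸ h')
    have ndG2 : ¬ π ∣ G2 := by
      intro h
      rcases hprime.dvd_mul.mp h with h' | h'
      · rcases hprime.dvd_mul.mp h' with h'' | h''
        · exact hπ.not_isUnit (isUnit_of_dvd_unit h'' h6u)
        · exact d3 (eX ▸ h'')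
      · exact d4 (eM1 ▸ h')
    have ord0 : ∀ P : ℚ[X], ¬ π ∣ P → ordAt π (A P) = 0 := fun P h => by
      rw [ordAtAlg _ hπ.not_isUnit, multiplicity_eq_zero.mpr h]; norm_num
    rw [tameElemAt, tameElemAt, ord0 F1 ndF1, ord0 G1 ndG1, ord0 F2 ndF2, ord0 G2 ndG2]
    have h1 : ResIsSquareAt π 1 := by
      rw [ResIsSquareAt, RatFunc.num_one, RatFunc.denom_one, mul_one, map_one]
      exact IsSquare.one
    convert h1 using 1
    norm_num
  · -- the five named points
    intro α hα
    rcases hα with h | h | h | h | h <;> subst h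
    exacts [keyN3, keyN1, key0, key1, key3]
  · -- infinity
    have degF1 : F1.natDegree = 4 := by
      have h : F1 = C (-3) * ((X - C 1)^3 * (X + C 3)) := by
        simp only [F1, map_neg, map_one, map_ofNat]; ring
      rw [h, natDegree_C_mul (by norm_num),
        natDegree_mul (pow_ne_zero 3 (X_sub_C_ne_zero 1)) (X_add_C_ne_zero 3),
        natDegree_pow, natDegree_X_sub_C, natDegree_X_add_C]
    have degF2 : F2.natDegree = 4 := by
      have h : F2 = C (-3) * ((X - C (-1))^3 * (X + C (-3))) := by
        simp only [F2, map_neg, map_one, map_ofNat]; ring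
      rw [h, natDegree_C_mul (by norm_num),
        natDegree_mul (pow_ne_zero 3 (X_sub_C_ne_zero (-1))) (X_add_C_ne_zero (-3)),
        natDegree_pow, natDegree_X_sub_C, natDegree_X_add_C]
    have degG1 : G1.natDegree = 2 := by
      have h : G1 = C 6 * (X * (X + C 1)) := by
        simp only [G1, map_one, map_ofNat]; ring
      rw [h, natDegree_C_mul (by norm_num), natDegree_mul X_ne_zero (X_add_C_ne_zero 1),
        natDegree_X, natDegree_X_add_C]
    have degG2 : G2.natDegree = 2 := by
      have h : G2 = C 6 * (X * (X + C (-1))) := by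
        simp only [G2, map_neg, map_one, map_ofNat]; ring
      rw [h, natDegree_C_mul (by norm_num), natDegree_mul X_ne_zero (X_add_C_ne_zero (-1)),
        natDegree_X, natDegree_X_add_C]
    have lcF1 : F1.leadingCoeff = -3 := by
      have h : F1 = C (-3) * ((X - C 1)^3 * (X + C 3)) := by
        simp only [F1, map_neg, map_one, map_ofNat]; ring
      rw [h, leadingCoeff_mul, (((monic_X_sub_C (1:ℚ)).pow 3).mul (monic_X_add_C 3)).leadingCoeff,
        leadingCoeff_C]; ring
    have lcF2 : F2.leadingCoeff = -3 := by
      have h : F2 = C (-3) * ((X - C (-1))^3 * (X + C (-3))) := by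
        simp only [F2, map_neg, map_one, map_ofNat]; ring
      rw [h, leadingCoeff_mul,
        (((monic_X_sub_C (-1:ℚ)).pow 3).mul (monic_X_add_C (-3))).leadingCoeff,
        leadingCoeff_C]; ring
    have lcG1 : G1.leadingCoeff = 6 := by
      have h : G1 = C 6 * (X * (X + C 1)) := by
        simp only [G1, map_one, map_ofNat]; ring
      rw [h, leadingCoeff_mul, (monic_X.mul (monic_X_add_C (1:ℚ))).leadingCoeff,
        leadingCoeff_C]; ring
    have lcG2 : G2.leadingCoeff = 6 := by
      have h : G2 = C 6 * (X * (X + C (-1))) := by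
        simp only [G2, map_neg, map_one, map_ofNat]; ring
      rw [h, leadingCoeff_mul, (monic_X.mul (monic_X_add_C (-1:ℚ))).leadingCoeff,
        leadingCoeff_C]; ring
    have o1 : ordInf (A F1) = -4 := by rw [ordInfAlg, degF1]; norm_num
    have o2 : ordInf (A G1) = -2 := by rw [ordInfAlg, degG1]; norm_num
    have o3 : ordInf (A F2) = -4 := by rw [ordInfAlg, degF2]; norm_num
    have o4 : ordInf (A G2) = -2 := by rw [ordInfAlg, degG2]; norm_num
    rw [tameElemInf, tameElemInf, o1, o2, o3, o4]
    have hF1 : A F1 ≠ 0 := RatFunc.algebraMap_ne_zero F1_ne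
    have hF2 : A F2 ≠ 0 := RatFunc.algebraMap_ne_zero F2_ne
    have h2 := key_inf (G1^4 * G2^4) (F1^2 * F2^2)
      (mul_ne_zero (pow_ne_zero 4 G1_ne) (pow_ne_zero 4 G2_ne))
      (mul_ne_zero (pow_ne_zero 2 F1_ne) (pow_ne_zero 2 F2_ne)) ?_
    · convert h2 using 1
      simp only [A]
      rw [map_mul, map_pow, map_pow, map_mul, map_pow, map_pow, div_eq_mul_inv, mul_inv]
      norm_num [zpow_neg]
      first
        | rfl
        | ring
        | (simp only [inv_pow]; ring)
    rw [leadingCoeff_mul, leadingCoeff_pow, leadingCoeff_pow, leadingCoeff_mul,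
      leadingCoeff_pow, leadingCoeff_pow, lcF1, lcF2, lcG1, lcG2]
    exact ⟨11664, by norm_num⟩
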